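/- Let 0 ≤ ε < 2 and let (ξ, η) : ℝ → ℝ² be a differentiable solution of the reduced Pikovsky–Topaj system with ξ(0) = 0. Then ξ(t) = 0 for all t ∈ ℝ. (In other words, the line ξ = 0 is invariant under the dynamics.) -/

import Mathlib

open Real

/-- `(ξ, η)` is a solution of the reduced (nonautonomous) Pikovsky–Topaj system
`ξ' = 2ε sin ξ sin η / (2 + ε cos(t − η))`,
`η' = (1 − ε cos(t − η) − 2ε cos ξ cos η) / (2 + ε cos(t − η))`. -/
def IsReducedPTSol (ε : ℝ) (ξ η : ℝ → ℝ) : Prop :=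
  ∀ t : ℝ,
    HasDerivAt ξ
      (2 * ε * Real.sin (ξ t) * Real.sin (η t) / (2 + ε * Real.cos (t - η t))) t ∧
    HasDerivAt η
      ((1 - ε * Real.cos (t - η t) - 2 * ε * Real.cos (ξ t) * Real.cos (η t)) /
        (2 + ε * Real.cos (t - η t))) t

/-- Gronwall-type: sublinear derivative bound and zero initial condition give zero forward. -/
lemma zero_of_deriv_bound (K : ℝ) (f F : ℝ → ℝ)
    (hf : ∀ t, HasDerivAt f (F t) t) (hb : ∀ t, |F t| ≤ K * |f t|)
    (h0 : f 0 = 0) : ∀ t ≥ 0, f t = 0 := by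
  intro t ht
  have := norm_le_gronwallBound_of_norm_deriv_right_le (f := f) (f' := F)
    (δ := 0) (K := K) (ε := 0) (a := 0) (b := t)
    (fun s _ => (hf s).continuousAt.continuousWithinAt)
    (fun s _ => (hf s).hasDerivWithinAt)
    (by simp [h0])
    (fun s _ => by simpa using hb s)
    t ⟨ht, le_refl t⟩
  rw [gronwallBound_ε0_δ0] at this
  simpa using le_antisymm this (abs_nonneg _)

/-- The line `ξ = 0` is invariant under the dynamics of the reduced Pikovsky–Topaj system. -/
theorem reducedPT_invariant_line (ε : ℝ) (hε₀ : 0 ≤ ε) (hε₂ : ε < 2) (ξ η : ℝ → ℝ)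
    (h : IsReducedPTSol ε ξ η) (h0 : ξ 0 = 0) :
    ∀ t : ℝ, ξ t = 0 := by
  set K : ℝ := 2 * ε / (2 - ε) with hK
  have hden : ∀ t : ℝ, (0:ℝ) < 2 + ε * Real.cos (t - η t) := by
    intro t
    have h1 : -1 ≤ Real.cos (t - η t) := neg_one_le_cos _
    nlinarith [Real.cos_le_one (t - η t)]
  -- bound on the RHS
  have hb : ∀ t : ℝ,
      |2 * ε * Real.sin (ξ t) * Real.sin (η t) / (2 + ε * Real.cos (t - η t))| ≤ K * |ξ t| := by
    intro t
    have hd := hden t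
    have hd2 : (2:ℝ) - ε ≤ 2 + ε * Real.cos (t - η t) := by
      nlinarith [neg_one_le_cos (t - η t)]
    have h2e : (0:ℝ) < 2 - ε := by linarith
    rw [abs_div, div_le_iff₀ (by positivity : (0:ℝ) < |2 + ε * Real.cos (t - η t)|)]
    have habs : |2 + ε * Real.cos (t - η t)| = 2 + ε * Real.cos (t - η t) := abs_of_pos hd
    rw [habs]
    have hsin : |Real.sin (ξ t)| ≤ |ξ t| := abs_sin_le_abs
    have hsin2 : |Real.sin (η t)| ≤ 1 := abs_sin_le_one _
    have hnum : |2 * ε * Real.sin (ξ t) * Real.sin (η t)| ≤ 2 * ε * |ξ t| := by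
      rw [abs_mul, abs_mul]
      have h2e' : |2 * ε| = 2 * ε := abs_of_nonneg (by linarith)
      rw [h2e']
      calc 2 * ε * |Real.sin (ξ t)| * |Real.sin (η t)|
          ≤ 2 * ε * |ξ t| * 1 := by
            apply mul_le_mul (by nlinarith [abs_nonneg (Real.sin (ξ t)), abs_nonneg (ξ t)])
              hsin2 (abs_nonneg _) (by positivity)
        _ = 2 * ε * |ξ t| := by ring
    calc |2 * ε * Real.sin (ξ t) * Real.sin (η t)| ≤ 2 * ε * |ξ t| := hnum
      _ ≤ K * |ξ t| * (2 + ε * Real.cos (t - η t)) := by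
          rw [hK]
          rw [div_mul_eq_mul_div, div_mul_eq_mul_div, le_div_iff₀ h2e]
          nlinarith [abs_nonneg (ξ t), mul_nonneg hε₀ (abs_nonneg (ξ t))]
  -- forward in time
  have hfwd : ∀ t ≥ 0, ξ t = 0 :=
    zero_of_deriv_bound K ξ _ (fun t => (h t).1) hb h0
  -- backward in time: consider time reversal
  have hbwd : ∀ t ≥ 0, ξ (-t) = 0 := by
    apply zero_of_deriv_bound K (fun t => ξ (-t))
      (fun t => -(2 * ε * Real.sin (ξ (-t)) * Real.sin (η (-t)) /
        (2 + ε * Real.cos (-t - η (-t)))))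
    · intro t
      have := ((h (-t)).1).comp t (hasDerivAt_neg t)
      simpa [mul_comm, Function.comp_def] using this
    · intro t
      rw [abs_neg]
      exact hb (-t)
    · simpa using h0
  intro t
  rcases le_or_gt 0 t with ht | ht
  · exact hfwd t ht
  · have := hbwd (-t) (by linarith)
    simpa using this
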